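/- For 1 < p ∈ ℝ and G a finitely generated infinite group, the first reduced ℓ^p-cohomology H̄¹_{(p)}(G) is nonzero if and only if there exists a nonzero continuous right-translation-invariant linear functional on the Banach space D_p(G)/ℂ. -/

import Mathlib

open Filter Topology

namespace PHB

variable {G : Type*} [Group G]

/-- One Dirichlet term `‖f(gs⁻¹) − f(g)‖^p`. -/
noncomputable def dpTerm (p : ℝ) (f : G → ℂ) (s g : G) : ℝ := ‖f (g * s⁻¹) - f g‖ ^ p

/-- Membership in `D_p(G)`. -/
def MemDp (p : ℝ) (S : Finset G) (f : G → ℂ) : Prop :=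
  ∀ s ∈ S, Summable (dpTerm p f s)

/-- The Dirichlet `p`-sum `∑_{s∈S}∑_{g∈G} ‖f(gs⁻¹) − f(g)‖^p`. -/
noncomputable def dirSum (p : ℝ) (S : Finset G) (f : G → ℂ) : ℝ :=
  ∑ s ∈ S, ∑' g, dpTerm p f s g

/-- The `D_p`-norm `(∑_{s,g}|f(gs⁻¹)−f(g)|^p + |f(e)|^p)^{1/p}`. -/
noncomputable def dpNorm (p : ℝ) (S : Finset G) (f : G → ℂ) : ℝ :=
  (dirSum p S f + ‖f 1‖ ^ p) ^ (1/p)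

/-- The norm on `D_p(G)/ℂ`: `(∑_{s,g}|f(gs⁻¹)−f(g)|^p)^{1/p}`. -/
noncomputable def qNorm (p : ℝ) (S : Finset G) (f : G → ℂ) : ℝ :=
  dirSum p S f ^ (1/p)

/-- Boundedness of a function. -/
def BddFun (f : G → ℂ) : Prop := ∃ M : ℝ, ∀ g, ‖f g‖ ≤ M

/-- The sup norm. -/
noncomputable def supNorm (f : G → ℂ) : ℝ := ⨆ g, ‖f g‖

/-- The `BD_p`-norm `‖f‖_∞ + (∑_{s,g}|f(gs⁻¹)−f(g)|^p)^{1/p}`. -/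
noncomputable def bdpNorm (p : ℝ) (S : Finset G) (f : G → ℂ) : ℝ :=
  supNorm f + dirSum p S f ^ (1/p)

/-- Membership in `BD_p(G)`: bounded and finite Dirichlet `p`-sum. -/
def MemBDp (p : ℝ) (S : Finset G) (f : G → ℂ) : Prop := BddFun f ∧ MemDp p S f

/-- Membership in `ℓ^p(G)`. -/
def MemLp' (p : ℝ) (f : G → ℂ) : Prop := Summable fun g => ‖f g‖ ^ p

/-- `f` lies in the `D_p`-closure of the finitely supported functions `ℂG`. -/
def InClosCG (p : ℝ) (S : Finset G) (f : G → ℂ) : Prop :=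
  MemDp p S f ∧ ∀ ε : ℝ, 0 < ε →
    ∃ h : G → ℂ, (Function.support h).Finite ∧ dpNorm p S (f - h) < ε

/-- `f` is a bounded function in the `D_p`-closure of `ℂG`. -/
def InBClosCG (p : ℝ) (S : Finset G) (f : G → ℂ) : Prop := BddFun f ∧ InClosCG p S f

/-- `f` lies in the `D_p`-closure of `ℓ^p(G)`. -/
def InClosLp (p : ℝ) (S : Finset G) (f : G → ℂ) : Prop :=
  MemDp p S f ∧ ∀ ε : ℝ, 0 < ε →
    ∃ h : G → ℂ, MemLp' p h ∧ dpNorm p S (f - h) < ε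

/-- `f` is a bounded function in the `D_p`-closure of `ℓ^p(G)`. -/
def InBClosLp (p : ℝ) (S : Finset G) (f : G → ℂ) : Prop := BddFun f ∧ InClosLp p S f

/-- `f` lies in the `D_p`-closure of `ℓ^p(G) ⊕ ℂ`. -/
def InClosLpC (p : ℝ) (S : Finset G) (f : G → ℂ) : Prop :=
  MemDp p S f ∧ ∀ ε : ℝ, 0 < ε →
    ∃ (h : G → ℂ) (c : ℂ), MemLp' p h ∧ dpNorm p S (f - h - Function.const G c) < ε

/-- A character (nonzero multiplicative linear functional) on `BD_p(G)`. -/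
structure BDpChar (p : ℝ) (S : Finset G) where
  toFun : {f : G → ℂ // MemBDp p S f} → ℂ
  map_add : ∀ (f h : {f : G → ℂ // MemBDp p S f}) (hm : MemBDp p S (f.1 + h.1)),
    toFun ⟨f.1 + h.1, hm⟩ = toFun f + toFun h
  map_mul : ∀ (f h : {f : G → ℂ // MemBDp p S f}) (hm : MemBDp p S (f.1 * h.1)),
    toFun ⟨f.1 * h.1, hm⟩ = toFun f * toFun h
  map_smul : ∀ (c : ℂ) (f : {f : G → ℂ // MemBDp p S f}) (hm : MemBDp p S (c • f.1)),
    toFun ⟨c • f.1, hm⟩ = c * toFun f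
  map_one : ∀ hm : MemBDp p S (1 : G → ℂ), toFun ⟨1, hm⟩ = 1

/-- The weak-* topology on the spectrum `Sp(BD_p(G))`. -/
noncomputable instance (p : ℝ) (S : Finset G) : TopologicalSpace (BDpChar p S) :=
  TopologicalSpace.induced BDpChar.toFun Pi.topologicalSpace

/-- The evaluation embedding `i : G → Sp(BD_p(G))`, `(i g)(f) = f(g)`. -/
def evalChar (p : ℝ) (S : Finset G) (g : G) : BDpChar p S where
  toFun := fun f => f.1 g
  map_add := fun _ _ _ => rfl
  map_mul := fun _ _ _ => rfl
  map_smul := fun _ _ _ => rfl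
  map_one := fun _ => rfl

/-- The `p`-Laplacian `Δ_p f(g) = ∑_{s∈S} |f(gs⁻¹)−f(g)|^{p−2}(f(gs⁻¹)−f(g))`. -/
noncomputable def pLap (p : ℝ) (S : Finset G) (f : G → ℂ) (g : G) : ℂ :=
  ∑ s ∈ S, ((‖f (g * s⁻¹) - f g‖ ^ (p - 2) : ℝ) : ℂ) * (f (g * s⁻¹) - f g)

/-- `f` is `p`-harmonic: `f ∈ D_p(G)` and `Δ_p f ≡ 0`. -/
def PHarmonic (p : ℝ) (S : Finset G) (f : G → ℂ) : Prop :=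
  MemDp p S f ∧ ∀ g, pLap p S f g = 0

/-- The `p`-harmonic boundary `∂_p(G) ⊆ Sp(BD_p(G)) \ G`. -/
def pBoundary (p : ℝ) (S : Finset G) : Set (BDpChar p S) :=
  {x | (∀ g : G, x ≠ evalChar p S g) ∧
    ∀ (f : G → ℂ) (hf : MemBDp p S f), InBClosCG p S f → x.toFun ⟨f, hf⟩ = 0}

/-- The word metric on `G` with respect to the generating set `S`. -/
noncomputable def wordDist (S : Finset G) (x y : G) : ℕ :=
  sInf {n | ∃ l : List G, (∀ a ∈ l, a ∈ S) ∧ l.length = n ∧ x⁻¹ * y = l.prod}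

/-- The word length `|g| = d(e,g)`. -/
noncomputable def wordLen (S : Finset G) (g : G) : ℕ := wordDist S 1 g

/-- Right translation `f_x(g) = f(gx⁻¹)`. -/
def translateFun (f : G → ℂ) (x : G) : G → ℂ := fun g => f (g * x⁻¹)

/-- `φ : G → H` is a rough isometry with constants `a, b, c` for the word metrics. -/
def RoughIsom {G H : Type*} [Group G] [Group H] (S : Finset G) (T : Finset H)
    (φ : G → H) (a b c : ℝ) : Prop :=
  1 ≤ a ∧ 0 ≤ b ∧ 0 < c ∧
  (∀ x y : G, (1/a) * (wordDist S x y : ℝ) - b ≤ (wordDist T (φ x) (φ y) : ℝ) ∧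
    (wordDist T (φ x) (φ y) : ℝ) ≤ a * (wordDist S x y : ℝ) + b) ∧
  ∀ h : H, ∃ x : G, (wordDist T (φ x) h : ℝ) < c

/-- `S` is a symmetric generating set of `G`. -/
def SymmGen (S : Finset G) : Prop :=
  (∀ s ∈ S, s⁻¹ ∈ S) ∧ Subgroup.closure (S : Set G) = ⊤

end PHB

open Filter Topology PHB

namespace PHBAux

variable {G : Type*} [Group G] {p : ℝ} {S : Finset G}

lemma norm_sub_rpow_le {p : ℝ} (hp : 0 < p) (a b : ℂ) :
    ‖a - b‖ ^ p ≤ 2 ^ p * (‖a‖ ^ p + ‖b‖ ^ p) := by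
  have h1 : ‖a - b‖ ^ p ≤ (2 * max ‖a‖ ‖b‖) ^ p := by
    apply Real.rpow_le_rpow (norm_nonneg _) _ hp.le
    calc ‖a - b‖ ≤ ‖a‖ + ‖b‖ := norm_sub_le a b
      _ ≤ max ‖a‖ ‖b‖ + max ‖a‖ ‖b‖ := add_le_add (le_max_left _ _) (le_max_right _ _)
      _ = 2 * max ‖a‖ ‖b‖ := (two_mul _).symm
  have h2 : (2 * max ‖a‖ ‖b‖) ^ p = 2 ^ p * (max ‖a‖ ‖b‖) ^ p :=
    Real.mul_rpow (by norm_num) (le_max_of_le_left (norm_nonneg _))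
  have h3 : (max ‖a‖ ‖b‖) ^ p ≤ ‖a‖ ^ p + ‖b‖ ^ p := by
    rcases max_cases ‖a‖ ‖b‖ with ⟨h, _⟩ | ⟨h, _⟩ <;> rw [h]
    · nlinarith [Real.rpow_nonneg (norm_nonneg b) p]
    · nlinarith [Real.rpow_nonneg (norm_nonneg a) p]
  calc ‖a - b‖ ^ p ≤ 2 ^ p * (max ‖a‖ ‖b‖) ^ p := h2 ▸ h1
    _ ≤ 2 ^ p * (‖a‖ ^ p + ‖b‖ ^ p) := by
        apply mul_le_mul_of_nonneg_left h3 (Real.rpow_nonneg (by norm_num) p)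

lemma norm_add_rpow_le {p : ℝ} (hp : 0 < p) (a b : ℂ) :
    ‖a + b‖ ^ p ≤ 2 ^ p * (‖a‖ ^ p + ‖b‖ ^ p) := by simpa using norm_sub_rpow_le hp a (-b)

lemma dpTerm_nonneg (f : G → ℂ) (s g : G) : 0 ≤ dpTerm p f s g :=
  Real.rpow_nonneg (norm_nonneg _) p

/-- ℓ^p summability is invariant under right-translation of the variable. -/
lemma summable_translate {F : G → ℝ} (h : Summable F) (y : G) :
    Summable fun g => F (g * y) := (Equiv.mulRight y).summable_iff.2 h

lemma memLp'_zero (hp : 0 < p) : MemLp' p (0 : G → ℂ) := by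
  have : (fun g : G => ‖(0 : G → ℂ) g‖ ^ p) = fun _ => (0:ℝ) := by
    funext g; simp [Real.zero_rpow hp.ne']
  unfold MemLp'
  rw [this]
  exact summable_zero

lemma memLp'_neg {u : G → ℂ} (h : MemLp' p u) : MemLp' p (-u) := by
  unfold MemLp' at h ⊢; simpa using h

lemma memLp'_add (hp : 0 < p) {u v : G → ℂ} (hu : MemLp' p u) (hv : MemLp' p v) :
    MemLp' p (u + v) := by
  unfold MemLp' at hu hv ⊢
  apply Summable.of_nonneg_of_le (fun g => Real.rpow_nonneg (norm_nonneg _) p)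
    (fun g => norm_add_rpow_le hp (u g) (v g))
  exact ((hu.add hv).mul_left _)

lemma memLp'_sub (hp : 0 < p) {u v : G → ℂ} (hu : MemLp' p u) (hv : MemLp' p v) :
    MemLp' p (u - v) := by
  simpa [sub_eq_add_neg] using memLp'_add hp hu (memLp'_neg hv)

lemma memLp'_smul {u : G → ℂ} (c : ℂ) (hu : MemLp' p u) : MemLp' p (c • u) := by
  unfold MemLp' at hu ⊢
  have : (fun g : G => ‖(c • u) g‖ ^ p) = fun g => ‖c‖ ^ p * ‖u g‖ ^ p := by
    funext g
    rw [Pi.smul_apply, norm_smul, Real.mul_rpow (norm_nonneg c) (norm_nonneg (u g))]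
  rw [this]
  exact hu.mul_left _

/-- translate of an ℓ^p function is ℓ^p. -/
lemma memLp'_translateFun {u : G → ℂ} (hu : MemLp' p u) (x : G) :
    MemLp' p (translateFun u x) :=
  summable_translate hu x⁻¹

lemma memLp'_of_finite_support (hp : 0 < p) {u : G → ℂ} (h : (Function.support u).Finite) :
    MemLp' p u := by
  apply summable_of_finite_support
  apply h.subset
  intro g hg
  simp only [Function.mem_support] at hg ⊢
  intro h0
  exact hg (by simp [h0, Real.zero_rpow hp.ne'])

lemma memDp_of_memLp' (hp : 0 < p) {u : G → ℂ} (hu : MemLp' p u) : MemDp p S u := by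
  intro s _
  apply Summable.of_nonneg_of_le (dpTerm_nonneg u s)
    (fun g => norm_sub_rpow_le hp (u (g * s⁻¹)) (u g))
  exact (((summable_translate hu s⁻¹).add hu).mul_left _)

lemma memDp_add (hp : 0 < p) {u v : G → ℂ} (hu : MemDp p S u) (hv : MemDp p S v) :
    MemDp p S (u + v) := by
  intro s hs
  apply Summable.of_nonneg_of_le (dpTerm_nonneg _ s) (fun g => ?_)
    (((hu s hs).add (hv s hs)).mul_left (2 ^ p))
  have : (u + v) (g * s⁻¹) - (u + v) g = (u (g * s⁻¹) - u g) + (v (g * s⁻¹) - v g) := by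
    simp [Pi.add_apply]; ring
  unfold dpTerm
  rw [this]
  exact norm_add_rpow_le hp _ _

lemma memDp_smul {u : G → ℂ} (c : ℂ) (hu : MemDp p S u) : MemDp p S (c • u) := by
  intro s hs
  have : dpTerm p (c • u) s = fun g => ‖c‖ ^ p * dpTerm p u s g := by
    funext g
    unfold dpTerm
    rw [← Real.mul_rpow (norm_nonneg c) (norm_nonneg _), ← norm_smul, smul_sub]
    rfl
  rw [this]
  exact (hu s hs).mul_left _

lemma memDp_neg {u : G → ℂ} (hu : MemDp p S u) : MemDp p S (-u) := by
  have := memDp_smul (S := S) (-1 : ℂ) hu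
  simpa using this

lemma memDp_const (hp : 0 < p) (c : ℂ) : MemDp p S (Function.const G c) := by
  intro s _
  have : dpTerm p (Function.const G c) s = fun _ => (0:ℝ) := by
    funext g; unfold dpTerm; simp [Real.zero_rpow hp.ne']
  rw [this]; exact summable_zero

lemma memDp_sub (hp : 0 < p) {u v : G → ℂ} (hu : MemDp p S u) (hv : MemDp p S v) :
    MemDp p S (u - v) := by
  simpa [sub_eq_add_neg] using memDp_add hp hu (memDp_neg hv)

end PHBAux

open Filter Topology PHB PHBAux
set_option linter.unusedSectionVars false

namespace PHBAux2

variable {G : Type*} [Group G] {p : ℝ} {S : Finset G}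

lemma tsum_dpTerm_nonneg (u : G → ℂ) (s : G) : 0 ≤ ∑' g, dpTerm p u s g :=
  tsum_nonneg (fun g => Real.rpow_nonneg (norm_nonneg _) p)

lemma dirSum_nonneg (u : G → ℂ) : 0 ≤ dirSum p S u :=
  Finset.sum_nonneg fun s _ => tsum_dpTerm_nonneg u s

lemma dpTerm_sub_const (u : G → ℂ) (c : ℂ) (s : G) :
    dpTerm p (u - Function.const G c) s = dpTerm p u s := by
  funext g; unfold dpTerm; simp

lemma dirSum_sub_const (u : G → ℂ) (c : ℂ) :
    dirSum p S (u - Function.const G c) = dirSum p S u := by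
  unfold dirSum; simp_rw [dpTerm_sub_const]

lemma qNorm_le_dpNorm (u : G → ℂ) (hp : 0 < p) : qNorm p S u ≤ dpNorm p S u :=
  Real.rpow_le_rpow (dirSum_nonneg u)
    (le_add_of_nonneg_right (Real.rpow_nonneg (norm_nonneg _) p))
    (by positivity)

lemma tsum_translate (F : G → ℝ) (y : G) : ∑' g, F (g * y) = ∑' g, F g :=
  (Equiv.mulRight y).tsum_eq F

lemma dirSum_le_of_memLp' (hp : 0 < p) {u : G → ℂ} (hu : MemLp' p u) :
    dirSum p S u ≤ (S.card : ℝ) * (2 ^ p * (2 * ∑' g, ‖u g‖ ^ p)) := by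
  unfold dirSum
  have key : ∀ s ∈ S, ∑' g, dpTerm p u s g ≤ 2 ^ p * (2 * ∑' g, ‖u g‖ ^ p) := by
    intro s _
    have h1 : Summable fun g => ‖u (g * s⁻¹)‖ ^ p := (Equiv.mulRight s⁻¹).summable_iff.2 hu
    have hmaj : Summable fun g => 2 ^ p * (‖u (g * s⁻¹)‖ ^ p + ‖u g‖ ^ p) :=
      ((h1.add hu).mul_left _)
    calc ∑' g, dpTerm p u s g
        ≤ ∑' g, 2 ^ p * (‖u (g * s⁻¹)‖ ^ p + ‖u g‖ ^ p) := by
          apply Summable.tsum_le_tsum (fun g => norm_sub_rpow_le hp _ _) _ hmaj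
          · exact Summable.of_nonneg_of_le (fun g => Real.rpow_nonneg (norm_nonneg _) p)
              (fun g => norm_sub_rpow_le hp _ _) hmaj
      _ = 2 ^ p * ((∑' g, ‖u (g * s⁻¹)‖ ^ p) + ∑' g, ‖u g‖ ^ p) := by
          rw [tsum_mul_left, Summable.tsum_add h1 hu]
      _ = 2 ^ p * (2 * ∑' g, ‖u g‖ ^ p) := by
          rw [tsum_translate (fun g => ‖u g‖ ^ p) s⁻¹]; ring
  calc ∑ s ∈ S, ∑' g, dpTerm p u s g ≤ ∑ _s ∈ S, 2 ^ p * (2 * ∑' g, ‖u g‖ ^ p) :=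
        Finset.sum_le_sum key
    _ = (S.card : ℝ) * (2 ^ p * (2 * ∑' g, ‖u g‖ ^ p)) := by
        rw [Finset.sum_const, nsmul_eq_mul]

lemma qNorm_le_of_memLp' (hp : 0 < p) {u : G → ℂ} (hu : MemLp' p u) :
    qNorm p S u ≤ ((S.card : ℝ) * (2 ^ p * 2)) ^ (1/p) * (∑' g, ‖u g‖ ^ p) ^ (1/p) := by
  have hL : 0 ≤ ∑' g, ‖u g‖ ^ p := tsum_nonneg fun g => Real.rpow_nonneg (norm_nonneg _) p
  have hK : (0:ℝ) ≤ (S.card : ℝ) * (2 ^ p * 2) := by positivity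
  calc qNorm p S u ≤ ((S.card : ℝ) * (2 ^ p * 2) * ∑' g, ‖u g‖ ^ p) ^ (1/p) := by
        apply Real.rpow_le_rpow (dirSum_nonneg u) _ (by positivity)
        calc dirSum p S u ≤ (S.card : ℝ) * (2 ^ p * (2 * ∑' g, ‖u g‖ ^ p)) :=
              dirSum_le_of_memLp' hp hu
          _ = (S.card : ℝ) * (2 ^ p * 2) * ∑' g, ‖u g‖ ^ p := by ring
    _ = ((S.card : ℝ) * (2 ^ p * 2)) ^ (1/p) * (∑' g, ‖u g‖ ^ p) ^ (1/p) :=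
        Real.mul_rpow hK hL

/-- difference with a translate is ℓ^p (uses that S generates). -/
lemma memLp'_translate_sub (hp : 0 < p) (hS : SymmGen S) {f : G → ℂ}
    (hf : MemDp p S f) (x : G) : MemLp' p (translateFun f x - f) := by
  have hx : x ∈ Subgroup.closure (S : Set G) := hS.2 ▸ Subgroup.mem_top x
  induction hx using Subgroup.closure_induction with
  | mem s hs =>
      have : translateFun f s - f = fun g => f (g * s⁻¹) - f g := by
        funext g; simp [translateFun]
      rw [MemLp', this]
      exact hf s hs
  | one =>
      have : translateFun f 1 - f = 0 := by funext g; simp [translateFun]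
      rw [this]; exact memLp'_zero hp
  | mul x y _ _ Px Py =>
      have : translateFun f (x * y) - f
          = translateFun (translateFun f x - f) y + (translateFun f y - f) := by
        funext g; simp only [translateFun, Pi.add_apply, Pi.sub_apply, mul_inv_rev, mul_assoc]
        ring
      rw [this]
      exact memLp'_add hp (memLp'_translateFun Px y) Py
  | inv x _ Px =>
      have : translateFun f x⁻¹ - f = -(translateFun (translateFun f x - f) x⁻¹) := by
        funext g; simp [translateFun, mul_assoc]
      rw [this]
      exact memLp'_neg (memLp'_translateFun Px x⁻¹)

lemma memDp_translateFun (hp : 0 < p) (hS : SymmGen S) {f : G → ℂ}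
    (hf : MemDp p S f) (x : G) : MemDp p S (translateFun f x) := by
  have : translateFun f x = f + (translateFun f x - f) := by ring
  rw [this]
  exact memDp_add hp hf (memDp_of_memLp' hp (memLp'_translate_sub hp hS hf x))

end PHBAux2

open Filter Topology PHB PHBAux PHBAux2
set_option linter.unusedSectionVars false
set_option linter.unusedVariables false

namespace PHBAux3

variable {G : Type*} [Group G]

/-- the difference family indexed by `↥S × G`. -/
def diffMap (p : ℝ) (S : Finset G) (f : G → ℂ) : ↥S × G → ℂ :=
  fun i => f (i.2 * (i.1 : G)⁻¹) - f i.2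

lemma summable_diffMap {p : ℝ} {S : Finset G} {f : G → ℂ} (hf : MemDp p S f) :
    Summable fun i : ↥S × G => ‖diffMap p S f i‖ ^ p := by
  rw [summable_prod_of_nonneg (fun i => Real.rpow_nonneg (norm_nonneg _) p)]
  constructor
  · rintro ⟨s, hs⟩
    exact hf s hs
  · exact Summable.of_finite

lemma memℓp_diffMap {p : ℝ} (hp : 0 < p) {S : Finset G} {f : G → ℂ} (hf : MemDp p S f) :
    Memℓp (diffMap p S f) (ENNReal.ofReal p) := by
  apply memℓp_gen
  rw [ENNReal.toReal_ofReal hp.le]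
  exact summable_diffMap hf

/-- the element of `ℓ^p(S × G)` attached to `f ∈ D_p`. -/
noncomputable def toLpD {p : ℝ} (hp : 0 < p) (S : Finset G) (f : G → ℂ)
    (hf : MemDp p S f) : lp (fun _ : ↥S × G => ℂ) (ENNReal.ofReal p) :=
  ⟨diffMap p S f, memℓp_diffMap hp hf⟩

lemma norm_toLpD {p : ℝ} (hp : 0 < p) (S : Finset G) [Fact (1 ≤ ENNReal.ofReal p)]
    (f : G → ℂ) (hf : MemDp p S f) : ‖toLpD hp S f hf‖ = qNorm p S f := by
  have htr : (ENNReal.ofReal p).toReal = p := ENNReal.toReal_ofReal hp.le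
  rw [lp.norm_eq_tsum_rpow (by rw [htr]; exact hp), htr]
  have h1 : ∑' i : ↥S × G, ‖toLpD hp S f hf i‖ ^ p = dirSum p S f := by
    have := Summable.tsum_prod' (summable_diffMap hf) (fun s : ↥S => hf s s.2)
    show ∑' i : ↥S × G, ‖diffMap p S f i‖ ^ p = dirSum p S f
    rw [this, tsum_fintype]
    show ∑ s ∈ S.attach, ∑' g, dpTerm p f (s : G) g = dirSum p S f
    rw [Finset.sum_attach S fun s => ∑' g, dpTerm p f s g]
    rfl
  rw [h1]
  rfl

lemma toLpD_add {p : ℝ} (hp : 0 < p) (S : Finset G) {f h : G → ℂ}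
    (hf : MemDp p S f) (hh : MemDp p S h) (hm : MemDp p S (f + h)) :
    toLpD hp S (f + h) hm = toLpD hp S f hf + toLpD hp S h hh := by
  apply Subtype.ext
  funext i
  show diffMap p S (f + h) i = diffMap p S f i + diffMap p S h i
  unfold diffMap
  simp only [Pi.add_apply]
  ring

lemma toLpD_sub {p : ℝ} (hp : 0 < p) (S : Finset G) {f h : G → ℂ}
    (hf : MemDp p S f) (hh : MemDp p S h) (hm : MemDp p S (f - h)) :
    toLpD hp S (f - h) hm = toLpD hp S f hf - toLpD hp S h hh := by
  apply Subtype.ext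
  funext i
  show diffMap p S (f - h) i = diffMap p S f i - diffMap p S h i
  unfold diffMap
  simp only [Pi.sub_apply]
  ring

lemma toLpD_smul {p : ℝ} (hp : 0 < p) (S : Finset G) {f : G → ℂ} (c : ℂ)
    (hf : MemDp p S f) (hm : MemDp p S (c • f)) :
    toLpD hp S (c • f) hm = c • toLpD hp S f hf := by
  apply Subtype.ext
  funext i
  show diffMap p S (c • f) i = c • diffMap p S f i
  unfold diffMap
  simp only [Pi.smul_apply, smul_eq_mul]
  ring

lemma toLpD_const {p : ℝ} (hp : 0 < p) (S : Finset G) (c : ℂ) (hm : MemDp p S (Function.const G c)) :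
    toLpD hp S (Function.const G c) hm = 0 := by
  apply Subtype.ext
  funext i
  show diffMap p S (Function.const G c) i = 0
  unfold diffMap
  simp

/-- image of `ℓ^p(G) ∩ D_p` inside `ℓ^p(S × G)`. -/
noncomputable def Wlp {p : ℝ} (hp : 0 < p) (S : Finset G) :
    Submodule ℂ (lp (fun _ : ↥S × G => ℂ) (ENNReal.ofReal p)) where
  carrier := {x | ∃ u : G → ℂ, ∃ hu : MemLp' p u,
    x = toLpD hp S u (memDp_of_memLp' hp hu)}
  zero_mem' := by
    refine ⟨0, memLp'_zero hp, ?_⟩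
    apply Subtype.ext
    funext i
    show (0 : ℂ) = diffMap p S 0 i
    unfold diffMap
    simp
  add_mem' := by
    rintro x y ⟨u, hu, rfl⟩ ⟨v, hv, rfl⟩
    exact ⟨u + v, memLp'_add hp hu hv,
      (toLpD_add hp S _ _ _).symm⟩
  smul_mem' := by
    rintro c x ⟨u, hu, rfl⟩
    exact ⟨c • u, memLp'_smul c hu,
      (toLpD_smul hp S c _ _).symm⟩

end PHBAux3

open Filter Topology PHB PHBAux PHBAux2 PHBAux3
set_option linter.unusedSectionVars false
set_option linter.unusedVariables false

namespace PHBAux4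

lemma forward {G : Type*} [Group G] (S : Finset G) (hS : PHB.SymmGen S) (p : ℝ) (hp : 1 < p)
    (f : G → ℂ) (hf : PHB.MemDp p S f) (hncl : ¬ PHB.InClosLpC p S f) :
    ∃ T : (G → ℂ) → ℂ,
      (∀ f h : G → ℂ, PHB.MemDp p S f → PHB.MemDp p S h → T (f + h) = T f + T h) ∧
      (∀ (c : ℂ) (f : G → ℂ), PHB.MemDp p S f → T (c • f) = c * T f) ∧
      (∀ c : ℂ, T (Function.const G c) = 0) ∧
      (∃ C : ℝ, ∀ f : G → ℂ, PHB.MemDp p S f → ‖T f‖ ≤ C * PHB.qNorm p S f) ∧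
      (∀ (f : G → ℂ) (x : G), PHB.MemDp p S f → T (PHB.translateFun f x) = T f) ∧
      (∃ f : G → ℂ, PHB.MemDp p S f ∧ T f ≠ 0) := by
  classical
  have hp0 : (0:ℝ) < p := zero_lt_one.trans hp
  haveI : Fact (1 ≤ ENNReal.ofReal p) := ⟨ENNReal.one_le_ofReal.2 hp.le⟩
  set E := lp (fun _ : ↥S × G => ℂ) (ENNReal.ofReal p) with hE
  set W : Submodule ℂ E := Wlp hp0 S with hW
  set Wc : Submodule ℂ E := W.topologicalClosure with hWc
  haveI hcl : IsClosed (Wc : Set E) := Submodule.isClosed_topologicalClosure W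
  -- the point is not in the closure
  have hx : toLpD hp0 S f hf ∉ Wc := by
    intro hmem
    apply hncl
    refine ⟨hf, fun ε hε => ?_⟩
    have hmem' : toLpD hp0 S f hf ∈ closure (W : Set E) := by
      rw [← Submodule.topologicalClosure_coe]; exact hmem
    rw [Metric.mem_closure_iff] at hmem'
    obtain ⟨y, hyW, hdist⟩ := hmem' ε hε
    obtain ⟨u, hu, rfl⟩ := hyW
    refine ⟨u, (f - u) 1, hu, ?_⟩
    have hqd : PHB.dpNorm p S (f - u - Function.const G ((f - u) 1)) = PHB.qNorm p S (f - u) := by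
      unfold PHB.dpNorm PHB.qNorm
      rw [dirSum_sub_const]
      have h0 : (f - u - Function.const G ((f - u) 1)) 1 = 0 := by simp
      rw [h0]
      rw [norm_zero, Real.zero_rpow hp0.ne', add_zero]
    rw [hqd]
    have hqe : PHB.qNorm p S (f - u) = dist (toLpD hp0 S f hf) (toLpD hp0 S u (memDp_of_memLp' hp0 hu)) := by
      rw [dist_eq_norm, ← toLpD_sub hp0 S hf (memDp_of_memLp' hp0 hu) (memDp_sub hp0 hf (memDp_of_memLp' hp0 hu)),
        norm_toLpD]
    rw [hqe]
    exact hdist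
  have hxne : (Submodule.Quotient.mk (toLpD hp0 S f hf) : E ⧸ Wc) ≠ 0 := by
    intro h0
    exact hx ((Submodule.Quotient.mk_eq_zero Wc).1 h0)
  obtain ⟨g, hg1, hgx⟩ := exists_dual_vector ℂ _ (norm_ne_zero_iff.2 hxne)
  refine ⟨fun u => if hu : PHB.MemDp p S u then
      g (Submodule.Quotient.mk (toLpD hp0 S u hu)) else 0, ?_, ?_, ?_, ?_, ?_, ?_⟩
  · intro f1 f2 h1 h2
    dsimp only
    have hm : PHB.MemDp p S (f1 + f2) := memDp_add hp0 h1 h2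
    rw [dif_pos hm, dif_pos h1, dif_pos h2, toLpD_add hp0 S h1 h2 hm]
    rw [Submodule.Quotient.mk_add, map_add]
  · intro c f1 h1
    dsimp only
    have hm : PHB.MemDp p S (c • f1) := memDp_smul c h1
    rw [dif_pos hm, dif_pos h1, toLpD_smul hp0 S c h1 hm]
    rw [Submodule.Quotient.mk_smul, map_smul, smul_eq_mul]
  · intro c
    dsimp only
    rw [dif_pos (memDp_const hp0 c), toLpD_const]
    simp
  · refine ⟨‖g‖, fun u hu => ?_⟩
    dsimp only
    rw [dif_pos hu]
    calc ‖g (Submodule.Quotient.mk (toLpD hp0 S u hu))‖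
        ≤ ‖g‖ * ‖(Submodule.Quotient.mk (toLpD hp0 S u hu) : E ⧸ Wc)‖ := g.le_opNorm _
      _ ≤ ‖g‖ * ‖toLpD hp0 S u hu‖ :=
          mul_le_mul_of_nonneg_left (Submodule.Quotient.norm_mk_le _ _) (norm_nonneg g)
      _ = ‖g‖ * PHB.qNorm p S u := by rw [norm_toLpD]
  · intro u x hu
    dsimp only
    have hux : PHB.MemDp p S (PHB.translateFun u x) := memDp_translateFun hp0 hS hu x
    rw [dif_pos hux, dif_pos hu]
    congr 1
    rw [Submodule.Quotient.eq]
    rw [← toLpD_sub hp0 S hux hu (memDp_sub hp0 hux hu)]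
    apply Submodule.le_topologicalClosure W
    exact ⟨PHB.translateFun u x - u, memLp'_translate_sub hp0 hS hu x, rfl⟩
  · refine ⟨f, hf, ?_⟩
    dsimp only
    rw [dif_pos hf, hgx]
    exact Complex.ofReal_ne_zero.2 (norm_ne_zero_iff.2 hxne)

end PHBAux4

open Filter Topology PHB PHBAux PHBAux2 PHBAux3
open scoped Classical
set_option linter.unusedSectionVars false
set_option linter.unusedVariables false

namespace PHBAux5

variable {G : Type*} [Group G]

/-- delta function at `y`. -/
noncomputable def dl (y : G) : G → ℂ := fun g => if g = y then 1 else 0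

lemma dl_support (y : G) : Function.support (dl y) ⊆ {y} := by
  intro g hg
  simp only [Function.mem_support, dl] at hg
  by_contra h
  simp only [Set.mem_singleton_iff] at h
  exact hg (if_neg h)

lemma memLp'_dl {p : ℝ} (hp : 0 < p) (y : G) : MemLp' p (dl y) :=
  memLp'_of_finite_support hp ((Set.finite_singleton y).subset (dl_support y))

lemma translate_dl (y x : G) : translateFun (dl y) x = dl (y * x) := by
  funext g
  simp only [translateFun, dl]
  congr 1
  simp [mul_inv_eq_iff_eq_mul]

/-- indicator of a finset. -/
noncomputable def indF (F : Finset G) : G → ℂ := fun g => if g ∈ F then 1 else 0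

lemma indF_support (F : Finset G) : Function.support (indF F) ⊆ F := by
  intro g hg
  simp only [Function.mem_support, indF] at hg
  by_contra h
  exact hg (if_neg h)

lemma memLp'_indF {p : ℝ} (hp : 0 < p) (F : Finset G) : MemLp' p (indF F) :=
  memLp'_of_finite_support hp (F.finite_toSet.subset (indF_support F))

lemma tsum_indF {p : ℝ} (hp : 0 < p) (F : Finset G) :
    ∑' g, ‖indF F g‖ ^ p = (F.card : ℝ) := by
  have h1 : ∀ g ∉ F, ‖indF F g‖ ^ p = 0 := by
    intro g hg
    simp [indF, if_neg hg, Real.zero_rpow hp.ne']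
  rw [tsum_eq_sum h1]
  have : ∀ g ∈ F, ‖indF F g‖ ^ p = 1 := by
    intro g hg
    simp [indF, if_pos hg]
  rw [Finset.sum_congr rfl this, Finset.sum_const, nsmul_eq_mul, mul_one]

lemma indF_insert (a : G) (F : Finset G) (ha : a ∉ F) :
    indF (insert a F) = dl a + indF F := by
  funext g
  simp only [indF, dl, Pi.add_apply, Finset.mem_insert]
  by_cases hg : g = a
  · subst hg
    rw [if_pos (Or.inl rfl), if_pos rfl, if_neg (by exact fun h => ha h)]
    norm_num
  · by_cases hg2 : g ∈ F
    · rw [if_pos (Or.inr hg2), if_neg hg, if_pos hg2]; norm_num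
    · rw [if_neg (by tauto), if_neg hg, if_neg hg2]; norm_num

variable {p : ℝ} {S : Finset G} {T : (G → ℂ) → ℂ}

section TProps

variable (hp : 0 < p)
  (hadd : ∀ f h : G → ℂ, MemDp p S f → MemDp p S h → T (f + h) = T f + T h)
  (hsmul : ∀ (c : ℂ) (f : G → ℂ), MemDp p S f → T (c • f) = c * T f)

include hp hsmul in
lemma T_zero : T 0 = 0 := by
  have h0 : MemDp p S (0 : G → ℂ) := memDp_of_memLp' hp (memLp'_zero hp)
  have := hsmul 0 0 h0
  simpa using this

include hp hadd in
lemma T_sub {u v : G → ℂ} (hu : MemDp p S u) (hv : MemDp p S v) :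
    T (u - v) = T u - T v := by
  have h1 : MemDp p S (u - v) := memDp_sub hp hu hv
  have := hadd (u - v) v h1 hv
  rw [sub_add_cancel] at this
  rw [this]; ring

include hp hadd hsmul in
/-- T of a finset indicator is `card • T (dl 1)`. -/
lemma T_indF (hinv : ∀ (f : G → ℂ) (x : G), MemDp p S f → T (translateFun f x) = T f)
    (F : Finset G) : T (indF F) = (F.card : ℂ) * T (dl 1) := by
  classical
  induction F using Finset.induction_on with
  | empty =>
      have : indF (∅ : Finset G) = 0 := by funext g; simp [indF]
      rw [this, T_zero hp hsmul]
      simp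
  | @insert a F ha ih =>
      rw [indF_insert a F ha,
        hadd _ _ (memDp_of_memLp' hp (memLp'_dl hp a)) (memDp_of_memLp' hp (memLp'_indF hp F)),
        ih]
      have hda : T (dl a) = T (dl 1) := by
        have := hinv (dl 1) a (memDp_of_memLp' hp (memLp'_dl hp 1))
        rw [translate_dl, one_mul] at this
        exact this
      rw [hda, Finset.card_insert_of_notMem ha]
      push_cast
      ring

include hp hadd hsmul in
/-- T vanishes on functions supported in a finset. -/
lemma T_finsupp (hdl : ∀ y : G, T (dl y) = 0) :
    ∀ F : Finset G, ∀ h : G → ℂ, (∀ g, g ∉ F → h g = 0) → T h = 0 := by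
  classical
  intro F
  induction F using Finset.induction_on with
  | empty =>
      intro h hh
      have : h = 0 := by funext g; exact hh g (by simp)
      rw [this, T_zero hp hsmul]
  | @insert a F ha ih =>
      intro h hh
      have hsupp : ∀ g, g ∉ F → (h - h a • dl a) g = 0 := by
        intro g hg
        by_cases hga : g = a
        · subst hga; simp [dl]
        · have : h g = 0 := hh g (by simp [hga, hg])
          simp [dl, hga, this]
      have hmemh : MemDp p S h :=
        memDp_of_memLp' hp (memLp'_of_finite_support hp
          (((insert a F).finite_toSet).subset (by
            intro g hg
            simp only [Function.mem_support] at hg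
            by_contra hc
            exact hg (hh g (by simpa using hc)))))
      have hmemd : MemDp p S (h a • dl a) :=
        memDp_of_memLp' hp (memLp'_smul _ (memLp'_dl hp a))
      have hdec : T (h - h a • dl a) = T h - T (h a • dl a) :=
        T_sub hp hadd hmemh hmemd
      have h1 : T (h - h a • dl a) = 0 := ih _ hsupp
      have h2 : T (h a • dl a) = 0 := by
        rw [hsmul _ _ (memDp_of_memLp' hp (memLp'_dl hp a)), hdl a, mul_zero]
      rw [h1, h2, sub_zero] at hdec
      exact hdec.symm

end TProps

end PHBAux5

open Filter Topology PHB PHBAux PHBAux2 PHBAux3 PHBAux5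
open scoped Classical
set_option linter.unusedSectionVars false
set_option linter.unusedVariables false

namespace PHBAux6

variable {G : Type*} [Group G] {p : ℝ} {S : Finset G} {T : (G → ℂ) → ℂ} {C : ℝ}

lemma qNorm_nonneg (u : G → ℂ) : 0 ≤ qNorm p S u :=
  Real.rpow_nonneg (dirSum_nonneg u) _

section Main

variable (hp : 1 < p)
  (hadd : ∀ f h : G → ℂ, MemDp p S f → MemDp p S h → T (f + h) = T f + T h)
  (hsmul : ∀ (c : ℂ) (f : G → ℂ), MemDp p S f → T (c • f) = c * T f)
  (hinv : ∀ (f : G → ℂ) (x : G), MemDp p S f → T (translateFun f x) = T f)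
  (hC : ∀ f : G → ℂ, MemDp p S f → ‖T f‖ ≤ C * qNorm p S f)

include hp hC in
lemma T_bound' (u : G → ℂ) (hu : MemDp p S u) : ‖T u‖ ≤ max C 0 * qNorm p S u :=
  le_trans (hC u hu) (mul_le_mul_of_nonneg_right (le_max_left _ _) (qNorm_nonneg u))

include hp hadd hsmul hinv hC in
lemma T_dl_one [Infinite G] : T (dl (1 : G)) = 0 := by
  have hp0 : (0:ℝ) < p := zero_lt_one.trans hp
  set C' := max C 0 with hC'
  set K := ((S.card : ℝ) * (2 ^ p * 2)) ^ (1/p) with hK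
  have hK0 : 0 ≤ K := Real.rpow_nonneg (by positivity) _
  have hC0 : 0 ≤ C' := le_max_right _ _
  -- the key bound for every n
  have key : ∀ n : ℕ, (n : ℝ) * ‖T (dl (1:G))‖ ≤ C' * K * (n : ℝ) ^ (1/p) := by
    intro n
    set F : Finset G := (Finset.range n).map (Infinite.natEmbedding G) with hF
    have hcard : F.card = n := by rw [hF, Finset.card_map, Finset.card_range]
    have h1 : T (indF F) = (n : ℂ) * T (dl 1) := by
      rw [T_indF hp0 hadd hsmul hinv F, hcard]
    have h2 : ‖T (indF F)‖ = (n : ℝ) * ‖T (dl (1:G))‖ := by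
      rw [h1, norm_mul, Complex.norm_natCast]
    have h3 : qNorm p S (indF F) ≤ K * (n : ℝ) ^ (1/p) := by
      have := qNorm_le_of_memLp' (S := S) hp0 (memLp'_indF hp0 F)
      rwa [tsum_indF hp0 F, hcard] at this
    calc (n : ℝ) * ‖T (dl (1:G))‖ = ‖T (indF F)‖ := h2.symm
      _ ≤ C' * qNorm p S (indF F) :=
          T_bound' hp hC (indF F) (memDp_of_memLp' hp0 (memLp'_indF hp0 F))
      _ ≤ C' * (K * (n : ℝ) ^ (1/p)) := mul_le_mul_of_nonneg_left h3 hC0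
      _ = C' * K * (n : ℝ) ^ (1/p) := by ring
  -- deduce the norm is ≤ C'K n^{1/p-1} for n ≥ 1
  have key2 : ∀ n : ℕ, 1 ≤ n → ‖T (dl (1:G))‖ ≤ C' * K * (n : ℝ) ^ (1/p - 1) := by
    intro n hn
    have hn0 : (0:ℝ) < n := by exact_mod_cast hn
    have : (n:ℝ) ^ (1/p - 1) = (n:ℝ) ^ (1/p) / n := by
      rw [Real.rpow_sub hn0, Real.rpow_one]
    rw [this, ← mul_div_assoc, le_div_iff₀ hn0]
    calc ‖T (dl (1:G))‖ * n = (n:ℝ) * ‖T (dl (1:G))‖ := by ring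
      _ ≤ C' * K * (n : ℝ) ^ (1/p) := key n
      _ = C' * (K * (n : ℝ) ^ (1/p)) := by ring
      _ = C' * K * (n:ℝ) ^ (1/p) := by ring
  -- limit
  have hexp : (0:ℝ) < 1 - 1/p := by
    have : 1/p < 1 := (div_lt_one hp0).2 hp
    linarith
  have hlim : Tendsto (fun n : ℕ => C' * K * (n : ℝ) ^ (1/p - 1)) atTop (𝓝 0) := by
    have h1 : Tendsto (fun x : ℝ => x ^ (-(1 - 1/p))) atTop (𝓝 0) :=
      tendsto_rpow_neg_atTop hexp
    have h2 : Tendsto (fun n : ℕ => ((n:ℝ)) ^ (1/p - 1)) atTop (𝓝 0) := by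
      have := h1.comp tendsto_natCast_atTop_atTop (α := ℕ)
      simpa [neg_sub, Function.comp_def] using this
    have := h2.const_mul (C' * K)
    simpa using this
  have hle : ‖T (dl (1:G))‖ ≤ 0 := by
    apply ge_of_tendsto hlim
    filter_upwards [eventually_ge_atTop 1] with n hn
    exact key2 n hn
  have := norm_nonneg (T (dl (1:G)))
  have hz : ‖T (dl (1:G))‖ = 0 := le_antisymm hle this
  exact norm_eq_zero.1 hz

include hp hadd hsmul hinv hC in
lemma T_lp_zero [Infinite G] (u : G → ℂ) (hu : MemLp' p u) : T u = 0 := by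
  have hp0 : (0:ℝ) < p := zero_lt_one.trans hp
  set C' := max C 0 with hC'
  set K := ((S.card : ℝ) * (2 ^ p * 2)) ^ (1/p) with hK
  have hK0 : 0 ≤ K := Real.rpow_nonneg (by positivity) _
  have hC0 : 0 ≤ C' := le_max_right _ _
  have hdl : ∀ y : G, T (dl y) = 0 := by
    intro y
    have := hinv (dl 1) y (memDp_of_memLp' hp0 (memLp'_dl hp0 1))
    rw [translate_dl, one_mul] at this
    rw [this]
    exact T_dl_one hp hadd hsmul hinv hC
  -- truncations
  have key : ∀ F : Finset G,
      ‖T u‖ ≤ C' * K * (∑' a : {x // x ∉ F}, ‖u ↑a‖ ^ p) ^ (1/p) := by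
    intro F
    set uF : G → ℂ := fun g => if g ∈ F then u g else 0 with huF
    have huF0 : ∀ g, g ∉ F → uF g = 0 := fun g hg => if_neg hg
    have hTuF : T uF = 0 := T_finsupp hp0 hadd hsmul hdl F uF huF0
    have hmemuF : MemLp' p uF :=
      memLp'_of_finite_support hp0 (F.finite_toSet.subset (by
        intro g hg
        simp only [Function.mem_support] at hg
        by_contra hc
        exact hg (huF0 g hc)))
    have hsplit : u = (u - uF) + uF := by ring
    have hTu : T u = T (u - uF) := by
      conv_lhs => rw [hsplit]
      rw [hadd _ _ (memDp_of_memLp' hp0 (memLp'_sub hp0 hu hmemuF))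
        (memDp_of_memLp' hp0 hmemuF), hTuF, add_zero]
    -- tail identity
    have htail : ∑' g, ‖(u - uF) g‖ ^ p = ∑' a : {x // x ∉ F}, ‖u ↑a‖ ^ p := by
      have hvsupp : Function.support (fun g => ‖(u - uF) g‖ ^ p) ⊆ {x | x ∉ F} := by
        intro g hg
        simp only [Function.mem_support] at hg
        intro hgF
        apply hg
        have : (u - uF) g = 0 := by simp [huF, if_pos hgF]
        rw [this, norm_zero, Real.zero_rpow hp0.ne']
      rw [← tsum_subtype_eq_of_support_subset hvsupp]
      apply tsum_congr
      rintro ⟨a, ha⟩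
      have : (u - uF) a = u a := by simp [huF, if_neg ha]
      rw [this]
    calc ‖T u‖ = ‖T (u - uF)‖ := by rw [hTu]
      _ ≤ C' * qNorm p S (u - uF) :=
          T_bound' hp hC _ (memDp_of_memLp' hp0 (memLp'_sub hp0 hu hmemuF))
      _ ≤ C' * (K * (∑' g, ‖(u - uF) g‖ ^ p) ^ (1/p)) :=
          mul_le_mul_of_nonneg_left (qNorm_le_of_memLp' hp0 (memLp'_sub hp0 hu hmemuF)) hC0
      _ = C' * K * (∑' g, ‖(u - uF) g‖ ^ p) ^ (1/p) := by ring
      _ = C' * K * (∑' a : {x // x ∉ F}, ‖u ↑a‖ ^ p) ^ (1/p) := by rw [htail]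
  -- the tail tends to zero along atTop
  have htail0 : Tendsto (fun F : Finset G => ∑' a : {x // x ∉ F}, ‖u ↑a‖ ^ p)
      atTop (𝓝 0) := tendsto_tsum_compl_atTop_zero (fun g : G => ‖u g‖ ^ p)
  have hcont : ContinuousAt (fun t : ℝ => C' * K * t ^ (1/p)) 0 := by
    apply ContinuousAt.mul continuousAt_const
    exact Real.continuousAt_rpow_const 0 (1/p) (Or.inr (by positivity))
  have hlim : Tendsto (fun F : Finset G => C' * K * (∑' a : {x // x ∉ F}, ‖u ↑a‖ ^ p) ^ (1/p))
      atTop (𝓝 0) := by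
    have h := hcont.tendsto.comp htail0
    have h0 : C' * K * (0:ℝ) ^ (1/p) = 0 := by
      rw [Real.zero_rpow (by positivity : (1:ℝ)/p ≠ 0), mul_zero]
    rw [h0] at h
    exact h
  have hle : ‖T u‖ ≤ 0 := ge_of_tendsto hlim (Eventually.of_forall key)
  exact norm_eq_zero.1 (le_antisymm hle (norm_nonneg _))

end Main

end PHBAux6

open Filter Topology PHB PHBAux PHBAux2 PHBAux3 PHBAux5 PHBAux6
open scoped Classical
set_option linter.unusedSectionVars false
set_option linter.unusedVariables false

namespace PHBAux7

lemma backward {G : Type*} [Group G] [Infinite G] (S : Finset G) (hS : PHB.SymmGen S)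
    (p : ℝ) (hp : 1 < p) (T : (G → ℂ) → ℂ)
    (hadd : ∀ f h : G → ℂ, PHB.MemDp p S f → PHB.MemDp p S h → T (f + h) = T f + T h)
    (hsmul : ∀ (c : ℂ) (f : G → ℂ), PHB.MemDp p S f → T (c • f) = c * T f)
    (hconst : ∀ c : ℂ, T (Function.const G c) = 0)
    (C : ℝ) (hC : ∀ f : G → ℂ, PHB.MemDp p S f → ‖T f‖ ≤ C * PHB.qNorm p S f)
    (hinv : ∀ (f : G → ℂ) (x : G), PHB.MemDp p S f → T (PHB.translateFun f x) = T f)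
    (f0 : G → ℂ) (hf0 : PHB.MemDp p S f0) (hT0 : T f0 ≠ 0) :
    ∃ f : G → ℂ, PHB.MemDp p S f ∧ ¬ PHB.InClosLpC p S f := by
  have hp0 : (0:ℝ) < p := zero_lt_one.trans hp
  refine ⟨f0, hf0, fun hcl => ?_⟩
  set C' := max C 0 with hC'
  have hC0 : 0 ≤ C' := le_max_right _ _
  have hTpos : 0 < ‖T f0‖ := norm_pos_iff.2 hT0
  have hε : 0 < ‖T f0‖ / (C' + 1) := by positivity
  obtain ⟨h, c, hhlp, hdp⟩ := hcl.2 _ hε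
  set w : G → ℂ := f0 - h - Function.const G c with hw
  have hmemh : PHB.MemDp p S h := memDp_of_memLp' hp0 hhlp
  have hmemc : PHB.MemDp p S (Function.const G c) := memDp_const hp0 c
  have hmemw : PHB.MemDp p S w := memDp_sub hp0 (memDp_sub hp0 hf0 hmemh) hmemc
  have hsplit : f0 = w + (h + Function.const G c) := by rw [hw]; ring
  have hTh : T h = 0 := T_lp_zero hp hadd hsmul hinv hC h hhlp
  have hTf0 : T f0 = T w := by
    conv_lhs => rw [hsplit]
    rw [hadd _ _ hmemw (memDp_add hp0 hmemh hmemc), hadd _ _ hmemh hmemc, hTh, hconst,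
      add_zero, add_zero]
  have hbound : ‖T f0‖ ≤ C' * (‖T f0‖ / (C' + 1)) := by
    calc ‖T f0‖ = ‖T w‖ := by rw [hTf0]
      _ ≤ C' * PHB.qNorm p S w := T_bound' hp hC w hmemw
      _ ≤ C' * PHB.dpNorm p S w :=
          mul_le_mul_of_nonneg_left (qNorm_le_dpNorm w hp0) hC0
      _ ≤ C' * (‖T f0‖ / (C' + 1)) :=
          mul_le_mul_of_nonneg_left hdp.le hC0
  have hlt : C' * (‖T f0‖ / (C' + 1)) < ‖T f0‖ := by
    rw [← mul_div_assoc, div_lt_iff₀ (by positivity : (0:ℝ) < C' + 1)]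
    nlinarith
  linarith

end PHBAux7

/-- `H̄¹_{(p)}(G) ≠ 0` iff there is a nonzero continuous
right-translation-invariant linear functional on `D_p(G)/ℂ`. -/
theorem reduced_cohomology_nonzero_iff_TILF {G : Type*} [Group G] [Infinite G]
    (S : Finset G) (hS : PHB.SymmGen S) (p : ℝ) (hp : 1 < p) :
    (∃ f : G → ℂ, PHB.MemDp p S f ∧ ¬ PHB.InClosLpC p S f) ↔
    ∃ T : (G → ℂ) → ℂ,
      (∀ f h : G → ℂ, PHB.MemDp p S f → PHB.MemDp p S h → T (f + h) = T f + T h) ∧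
      (∀ (c : ℂ) (f : G → ℂ), PHB.MemDp p S f → T (c • f) = c * T f) ∧
      (∀ c : ℂ, T (Function.const G c) = 0) ∧
      (∃ C : ℝ, ∀ f : G → ℂ, PHB.MemDp p S f → ‖T f‖ ≤ C * PHB.qNorm p S f) ∧
      (∀ (f : G → ℂ) (x : G), PHB.MemDp p S f → T (PHB.translateFun f x) = T f) ∧
      (∃ f : G → ℂ, PHB.MemDp p S f ∧ T f ≠ 0) := by
  constructor
  · rintro ⟨f, hf, hncl⟩
    exact PHBAux4.forward S hS p hp f hf hncl
  · rintro ⟨T, hadd, hsmul, hconst, ⟨C, hC⟩, hinv, f0, hf0, hT0⟩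
    exact PHBAux7.backward S hS p hp T hadd hsmul hconst C hC hinv f0 hf0 hT0
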